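/- Let $(A, \mathfrak{m}, k)$ be a noetherian local ring and $(F^\bullet, d^\bullet)$ a cochain complex of free $A$-modules of finite rank. Suppose $H^p(F^\bullet \otimes_A k) = 0$. Then $H^p(F^\bullet) = 0$ and the base change map $\varphi^{p-1} \colon H^{p-1}(F^\bullet) \otimes_A k \to H^{p-1}(F^\bullet \otimes_A k)$ is surjective. -/

import Mathlib

open TensorProduct IsLocalRing

open TensorProduct

section Aux


variable {A : Type*} [CommRing A] [IsLocalRing A]
variable {M : Type*} [AddCommGroup M] [Module A M]

lemma aux_surj (z : ResidueField A ⊗[A] M) : ∃ x : M, (1 : ResidueField A) ⊗ₜ[A] x = z := by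
  induction z using TensorProduct.induction_on with
  | zero => exact ⟨0, by simp⟩
  | tmul c m =>
    obtain ⟨a, rfl⟩ := Ideal.Quotient.mk_surjective c
    refine ⟨a • m, ?_⟩
    rw [← TensorProduct.smul_tmul]
    congr 1
    rw [Algebra.smul_def, mul_one]
    rfl
  | add x y hx hy =>
    obtain ⟨x1, rfl⟩ := hx
    obtain ⟨x2, rfl⟩ := hy
    exact ⟨x1 + x2, by rw [TensorProduct.tmul_add]⟩

lemma aux_ker (x : M) :
    (1 : ResidueField A) ⊗ₜ[A] x = 0 ↔ x ∈ (maximalIdeal A) • (⊤ : Submodule A M) := by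
  erw [← LinearEquiv.map_eq_zero_iff (TensorProduct.quotTensorEquivQuotSMul M (maximalIdeal A))]
  have h1 : (1 : ResidueField A) = Ideal.Quotient.mk (maximalIdeal A) 1 := rfl
  erw [h1, TensorProduct.quotTensorEquivQuotSMul_mk_tmul, one_smul,
    Submodule.Quotient.mk_eq_zero]

lemma aux_split [IsNoetherianRing A] [Module.Finite A M]
    {N : Type*} [AddCommGroup N] [Module A N] [Module.Free A N] [Module.Finite A N]
    (f : M →ₗ[A] N)
    (hf : Function.Injective (f.baseChange (ResidueField A))) :
    ∃ g : N →ₗ[A] M, g ∘ₗ f = LinearMap.id := by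
  set k := ResidueField A
  obtain ⟨h, hh⟩ := (f.baseChange k).exists_leftInverse_of_injective
    (LinearMap.ker_eq_bot.mpr hf)
  -- lift h to a map H : N → M
  let bN := Module.Free.chooseBasis A N
  have hx : ∀ i, ∃ x : M, (1 : k) ⊗ₜ[A] x = h ((1 : k) ⊗ₜ[A] bN i) := fun i => aux_surj _
  choose x hxx using hx
  let H : N →ₗ[A] M := bN.constr A x
  have Hk : H.baseChange k = h := by
    apply (bN.baseChange k).ext
    intro i
    rw [Module.Basis.baseChange_apply, LinearMap.baseChange_tmul, Module.Basis.constr_basis, hxx]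
  set e : M →ₗ[A] M := H ∘ₗ f with he
  have ek : e.baseChange k = LinearMap.id := by
    rw [he, LinearMap.baseChange_comp, Hk, hh]
  -- e is surjective by Nakayama
  have hsur : Function.Surjective e := by
    have hle : (⊤ : Submodule A M) ≤ LinearMap.range e ⊔ (maximalIdeal A) • ⊤ := by
      intro m _
      have h0 : (1 : k) ⊗ₜ[A] (m - e m) = 0 := by
        have : (1 : k) ⊗ₜ[A] (e m) = e.baseChange k ((1 : k) ⊗ₜ[A] m) := rfl
        rw [TensorProduct.tmul_sub, this, ek, LinearMap.id_apply, sub_self]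
      have hm : m - e m ∈ (maximalIdeal A) • (⊤ : Submodule A M) := (aux_ker _).mp h0
      have : m = e m + (m - e m) := by abel
      rw [this]
      exact Submodule.add_mem_sup (LinearMap.mem_range_self e m) hm
    have := Submodule.le_of_le_smul_of_le_jacobson_bot
      (Module.Finite.fg_top (R := A) (M := M))
      (IsLocalRing.maximalIdeal_le_jacobson ⊥) hle
    rw [← LinearMap.range_eq_top]
    exact top_le_iff.mp this
  have hinj : Function.Injective e :=
    IsNoetherian.injective_of_surjective_endomorphism e hsur
  let eq := LinearEquiv.ofBijective e ⟨hinj, hsur⟩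
  refine ⟨(eq.symm : M →ₗ[A] M) ∘ₗ H, ?_⟩
  ext m
  exact eq.symm_apply_apply m

end Aux

section Defs

variable (A : Type*) [CommRing A] (k : Type*) [CommRing k] [Algebra A k]
variable {M0 M1 M2 : Type*} [AddCommGroup M0] [AddCommGroup M1] [AddCommGroup M2]
  [Module A M0] [Module A M1] [Module A M2]

/-- Cohomology of `M0 → M1 → M2` at the middle spot. -/
abbrev coh (d0 : M0 →ₗ[A] M1) (d1 : M1 →ₗ[A] M2) : Type _ :=
  LinearMap.ker d1 ⧸ (LinearMap.range d0).comap (LinearMap.ker d1).subtype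

variable (d0 : M0 →ₗ[A] M1) (d1 : M1 →ₗ[A] M2)

/-- The map on kernels induced by `x ↦ 1 ⊗ x`. -/
noncomputable def kerBaseChange : LinearMap.ker d1 →ₗ[A] LinearMap.ker (d1.baseChange k) :=
  LinearMap.codRestrict ((LinearMap.ker (d1.baseChange k)).restrictScalars A)
    (((TensorProduct.mk A k M1) 1).comp (LinearMap.ker d1).subtype)
    (fun x => by
      simp [LinearMap.mem_ker, (LinearMap.mem_ker.mp x.2)])

/-- The natural base change map `k ⊗ H(F) → H(F ⊗ k)` on cohomology. -/
noncomputable def cohBaseChange :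
    k ⊗[A] coh A d0 d1 →ₗ[k] coh k (d0.baseChange k) (d1.baseChange k) :=
  LinearMap.liftBaseChange k <|
    Submodule.liftQ _
      (((Submodule.mkQ _).restrictScalars A).comp (kerBaseChange A k d1))
      (by
        rintro ⟨x, hx⟩ ⟨y, rfl⟩
        have : kerBaseChange A k d1 ⟨d0 y, hx⟩ ∈
            (LinearMap.range (d0.baseChange k)).comap
              (LinearMap.ker (d1.baseChange k)).subtype := by
          refine ⟨1 ⊗ₜ y, ?_⟩
          rfl
        simpa [LinearMap.mem_ker, Submodule.Quotient.mk_eq_zero] using this)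

end Defs

theorem stmt16 {A : Type*} [CommRing A] [IsLocalRing A] [IsNoetherianRing A]
    {F0 : Type*} [AddCommGroup F0] [Module A F0] [Module.Free A F0] [Module.Finite A F0]
    {F1 : Type*} [AddCommGroup F1] [Module A F1] [Module.Free A F1] [Module.Finite A F1]
    {F2 : Type*} [AddCommGroup F2] [Module A F2] [Module.Free A F2] [Module.Finite A F2]
    {F3 : Type*} [AddCommGroup F3] [Module A F3] [Module.Free A F3] [Module.Finite A F3]
    (d0 : F0 →ₗ[A] F1) (d1 : F1 →ₗ[A] F2) (d2 : F2 →ₗ[A] F3)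
    (hc01 : d1 ∘ₗ d0 = 0) (hc12 : d2 ∘ₗ d1 = 0)
    (hvanish : Subsingleton
      (coh (ResidueField A) (d1.baseChange (ResidueField A))
        (d2.baseChange (ResidueField A)))) :
    Subsingleton (coh A d1 d2) ∧
    Function.Surjective (cohBaseChange A (ResidueField A) d0 d1) := by
  classical
  set k := ResidueField A with hk
  have hle : LinearMap.range d1 ≤ LinearMap.ker d2 := by
    rintro _ ⟨x, rfl⟩
    exact LinearMap.mem_ker.mpr (by rw [← LinearMap.comp_apply, hc12]; rfl)
  set R := LinearMap.range d1 with hR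
  set f : (F2 ⧸ R) →ₗ[A] F3 := R.liftQ d2 hle with hf
  have hfm : f ∘ₗ R.mkQ = d2 := Submodule.liftQ_mkQ _ _ _
  have hmd : R.mkQ ∘ₗ d1 = 0 := by
    ext x
    simp only [LinearMap.comp_apply, LinearMap.zero_apply, Submodule.mkQ_apply,
      Submodule.Quotient.mk_eq_zero]
    exact LinearMap.mem_range_self d1 x
  have hinj : Function.Injective (f.baseChange k) := by
    rw [← LinearMap.ker_eq_bot]
    rw [Submodule.eq_bot_iff]
    intro z hz
    rw [LinearMap.mem_ker] at hz
    obtain ⟨w, rfl⟩ : ∃ w : k ⊗[A] F2, (R.mkQ).baseChange k w = z := by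
      obtain ⟨zb, rfl⟩ := aux_surj z
      obtain ⟨w0, rfl⟩ := Submodule.mkQ_surjective R zb
      exact ⟨(1 : k) ⊗ₜ[A] w0, rfl⟩
    have hw : w ∈ LinearMap.ker (d2.baseChange k) := by
      rw [LinearMap.mem_ker, ← hfm, LinearMap.baseChange_comp, LinearMap.comp_apply]
      exact hz
    obtain ⟨v, hv⟩ : w ∈ LinearMap.range (d1.baseChange k) := by
      have h1 : (Submodule.Quotient.mk (⟨w, hw⟩ : LinearMap.ker (d2.baseChange k)) :
          coh k (d1.baseChange k) (d2.baseChange k)) = 0 := Subsingleton.elim _ _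
      rw [Submodule.Quotient.mk_eq_zero] at h1
      exact h1
    rw [← hv, ← LinearMap.comp_apply, ← LinearMap.baseChange_comp, hmd]
    simp
  obtain ⟨g, hg⟩ := aux_split f hinj
  have hker : LinearMap.ker d2 ≤ R := by
    intro x hx
    have h1 : f (R.mkQ x) = 0 := by
      rw [← LinearMap.comp_apply, hfm]
      exact hx
    have h2 : R.mkQ x = 0 := by
      calc R.mkQ x = g (f (R.mkQ x)) := by rw [← LinearMap.comp_apply, hg]; rfl
      _ = 0 := by rw [h1, map_zero]
    rwa [Submodule.mkQ_apply, Submodule.Quotient.mk_eq_zero] at h2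
  constructor
  · rw [Submodule.Quotient.subsingleton_iff, eq_top_iff]
    rintro ⟨x, hx⟩ -
    exact hker hx
  · -- surjectivity
    have hproj : Module.Projective A (F2 ⧸ R) := Module.Projective.of_split f g hg
    obtain ⟨s, hs⟩ := Module.projective_lifting_property R.mkQ LinearMap.id
      (Submodule.mkQ_surjective R)
    have key : ∀ x : F1, (1 : k) ⊗ₜ[A] (d1 x) = 0 →
        ∃ y : F1, d1 y = d1 x ∧ (1 : k) ⊗ₜ[A] y = (0 : k ⊗[A] F1) := by
      intro x h0
      have hm : d1 x ∈ maximalIdeal A • (⊤ : Submodule A F2) := (aux_ker _).mp h0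
      set π : F2 →ₗ[A] F2 := LinearMap.id - s ∘ₗ R.mkQ with hπ
      have hπR : π (d1 x) = d1 x := by
        have : R.mkQ (d1 x) = 0 := by
          rw [Submodule.mkQ_apply, Submodule.Quotient.mk_eq_zero]
          exact LinearMap.mem_range_self d1 x
        simp [hπ, this]
      have hπrange : ∀ v : F2, π v ∈ R := by
        intro v
        have h1 : R.mkQ (π v) = 0 := by
          have h2 : R.mkQ (s (R.mkQ v)) = R.mkQ v := by
            rw [← LinearMap.comp_apply, hs]; rfl
          rw [hπ]
          simp only [LinearMap.sub_apply, LinearMap.id_apply, LinearMap.comp_apply,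
            map_sub, h2, sub_self]
        rwa [Submodule.mkQ_apply, Submodule.Quotient.mk_eq_zero] at h1
      have h2 : d1 x ∈ Submodule.map π (maximalIdeal A • (⊤ : Submodule A F2)) :=
        ⟨d1 x, hm, hπR⟩
      rw [Submodule.map_smul''] at h2
      have h3 : Submodule.map π ⊤ ≤ R := by
        rintro _ ⟨w, -, rfl⟩
        exact hπrange w
      have h4 : d1 x ∈ maximalIdeal A • R := Submodule.smul_mono le_rfl h3 h2
      rw [hR, LinearMap.range_eq_map, ← Submodule.map_smul''] at h4
      obtain ⟨y, hy, hyx⟩ := h4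
      exact ⟨y, hyx, (aux_ker y).mpr hy⟩
    intro c
    obtain ⟨⟨z, hz⟩, rfl⟩ := Submodule.Quotient.mk_surjective _ c
    obtain ⟨x, rfl⟩ := aux_surj z
    have h0 : (1 : k) ⊗ₜ[A] (d1 x) = 0 := by
      have := LinearMap.mem_ker.mp hz
      rwa [LinearMap.baseChange_tmul] at this
    obtain ⟨y, hy, hy0⟩ := key x h0
    have hx' : x - y ∈ LinearMap.ker d1 := by
      rw [LinearMap.mem_ker, map_sub, hy, sub_self]
    refine ⟨(1 : k) ⊗ₜ[A] (Submodule.Quotient.mk (⟨x - y, hx'⟩ : LinearMap.ker d1) :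
      coh A d0 d1), ?_⟩
    have hval : kerBaseChange A k d1 ⟨x - y, hx'⟩ =
        (⟨(1 : k) ⊗ₜ[A] x, hz⟩ : LinearMap.ker (d1.baseChange k)) := by
      apply Subtype.ext
      show (1 : k) ⊗ₜ[A] (x - y) = (1 : k) ⊗ₜ[A] x
      rw [TensorProduct.tmul_sub, hy0, sub_zero]
    show (cohBaseChange A k d0 d1) ((1:k) ⊗ₜ[A] _) = _
    rw [cohBaseChange, LinearMap.liftBaseChange_tmul, one_smul, Submodule.liftQ_apply,
      LinearMap.comp_apply, hval]
    rfl
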